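/- arXiv:0704.2929 — 2 statements merged into one kernel-verified Lean document; each statement's English description precedes it below -/
import Mathlib

section
/- If A is a real symmetric positive definite matrix and B is real symmetric, then every solution of the second-order linear system A y″ + B y = 0 with B positive definite remains bounded for all time. -/
open Matrix

lemma dot_continuous {n : ℕ} (B : Matrix (Fin n) (Fin n) ℝ) :
    Continuous fun x : Fin n → ℝ => x ⬝ᵥ B.mulVec x := by
  unfold dotProduct Matrix.mulVec
  exact continuous_finset_sum _ fun i _ =>
    (continuous_apply i).mul (continuous_finset_sum _ fun j _ =>
      ((continuous_const).mul (continuous_apply j)))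

lemma posdef_lower {n : ℕ} (B : Matrix (Fin n) (Fin n) ℝ) (hB : B.PosDef) :
    ∃ c > 0, ∀ x : Fin n → ℝ, c * ‖x‖ ^ 2 ≤ x ⬝ᵥ B.mulVec x := by
  rcases Nat.eq_zero_or_pos n with h0 | hn
  · refine ⟨1, one_pos, fun x => ?_⟩
    subst h0
    have hx : x = 0 := Subsingleton.elim _ _
    have h1 : ‖x‖ = 0 := by rw [hx, norm_zero]
    have h2 : x ⬝ᵥ B.mulVec x = 0 := by simp [dotProduct]
    rw [h1, h2]
    simp
  · have : Nontrivial (Fin n → ℝ) := by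
      haveI : Nonempty (Fin n) := ⟨⟨0, hn⟩⟩
      infer_instance
    obtain ⟨u, hu, hmin⟩ := (isCompact_sphere (0 : Fin n → ℝ) 1).exists_isMinOn
      (NormedSpace.sphere_nonempty.mpr zero_le_one) ((dot_continuous B).continuousOn)
    have hunorm : ‖u‖ = 1 := by simpa using mem_sphere_zero_iff_norm.mp hu
    have hune : u ≠ 0 := by intro h; rw [h] at hunorm; simp at hunorm
    refine ⟨u ⬝ᵥ B.mulVec u, hB.dotProduct_mulVec_pos hune, fun x => ?_⟩
    rcases eq_or_ne x 0 with rfl | hx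
    · simp
    · have hxn : (0:ℝ) < ‖x‖ := norm_pos_iff.mpr hx
      set v : Fin n → ℝ := ‖x‖⁻¹ • x with hv
      have hvs : v ∈ Metric.sphere (0 : Fin n → ℝ) 1 := by
        simp [hv, norm_smul, abs_of_pos (inv_pos.mpr hxn), inv_mul_cancel₀ hxn.ne']
      have := hmin hvs
      have hvv : v ⬝ᵥ B.mulVec v = ‖x‖⁻¹ ^ 2 * (x ⬝ᵥ B.mulVec x) := by
        simp [hv, smul_dotProduct, Matrix.mulVec_smul, dotProduct_smul, sq]
        ring
      have h2 : u ⬝ᵥ B.mulVec u ≤ ‖x‖⁻¹ ^ 2 * (x ⬝ᵥ B.mulVec x) := by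
        simpa [hvv] using this
      have := mul_le_mul_of_nonneg_left h2 (sq_nonneg ‖x‖)
      calc (u ⬝ᵥ B.mulVec u) * ‖x‖ ^ 2 ≤ ‖x‖ ^ 2 * (‖x‖⁻¹ ^ 2 * (x ⬝ᵥ B.mulVec x)) := by
              linarith
        _ = x ⬝ᵥ B.mulVec x := by
              field_simp

/-- Lagrange's stability claim (correctly established): if `A`, `B` are real
symmetric positive definite, every solution of `A y″ + B y = 0` is bounded. -/
theorem small_oscillations_stable {n : ℕ} (A B : Matrix (Fin n) (Fin n) ℝ)
    (hA : A.PosDef) (hB : B.PosDef)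
    (y y' y'' : ℝ → Fin n → ℝ)
    (hy : ∀ t : ℝ, HasDerivAt y (y' t) t)
    (hy' : ∀ t : ℝ, HasDerivAt y' (y'' t) t)
    (hode : ∀ t : ℝ, A.mulVec (y'' t) + B.mulVec (y t) = 0) :
    ∃ C : ℝ, ∀ t : ℝ, ‖y t‖ ≤ C := by
  obtain ⟨c, hc, hcB⟩ := posdef_lower B hB
  -- coordinate derivatives
  have hcoord : ∀ (f f' : ℝ → Fin n → ℝ), (∀ s, HasDerivAt f (f' s) s) →
      ∀ (t : ℝ) (i : Fin n), HasDerivAt (fun s => f s i) (f' t i) t := by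
    intro f f' hf t i
    exact (ContinuousLinearMap.proj (R := ℝ) (φ := fun _ : Fin n => ℝ) i).hasFDerivAt.comp_hasDerivAt t (hf t)
  have hmv : ∀ (M : Matrix (Fin n) (Fin n) ℝ) (f f' : ℝ → Fin n → ℝ),
      (∀ s, HasDerivAt f (f' s) s) → ∀ (t : ℝ) (i : Fin n),
      HasDerivAt (fun s => (M.mulVec (f s)) i) ((M.mulVec (f' t)) i) t := by
    intro M f f' hf t i
    have : ∀ s, (M.mulVec (f s)) i = ∑ j, M i j * f s j := fun s => rfl
    simp only [this]
    exact HasDerivAt.fun_sum fun j _ => (hcoord f f' hf t j).const_mul (M i j)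
  have hdot : ∀ (M : Matrix (Fin n) (Fin n) ℝ) (f f' g g' : ℝ → Fin n → ℝ),
      (∀ s, HasDerivAt f (f' s) s) → (∀ s, HasDerivAt g (g' s) s) → ∀ (t : ℝ),
      HasDerivAt (fun s => f s ⬝ᵥ M.mulVec (g s))
        (f' t ⬝ᵥ M.mulVec (g t) + f t ⬝ᵥ M.mulVec (g' t)) t := by
    intro M f f' g g' hf hg t
    have h1 : ∀ s, f s ⬝ᵥ M.mulVec (g s) = ∑ i, f s i * (M.mulVec (g s)) i := fun s => rfl
    have h2 : f' t ⬝ᵥ M.mulVec (g t) + f t ⬝ᵥ M.mulVec (g' t)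
        = ∑ i, (f' t i * (M.mulVec (g t)) i + f t i * (M.mulVec (g' t)) i) := by
      rw [Finset.sum_add_distrib]; rfl
    simp only [h1, h2]
    exact HasDerivAt.fun_sum fun i _ => (hcoord f f' hf t i).mul (hmv M g g' hg t i)
  -- symmetry of dot products
  have hsymm : ∀ (M : Matrix (Fin n) (Fin n) ℝ), M.IsHermitian →
      ∀ v w : Fin n → ℝ, v ⬝ᵥ M.mulVec w = w ⬝ᵥ M.mulVec v := by
    intro M hM v w
    have hMt : Mᵀ = M := by
      ext i j
      simpa using congrFun (congrFun hM i) j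
    rw [Matrix.dotProduct_mulVec]
    have : v ᵥ* M = M *ᵥ v := by
      conv_lhs => rw [← hMt]
      exact Matrix.vecMul_transpose M v
    rw [this, dotProduct_comm]
  -- energy
  set E : ℝ → ℝ := fun t => y' t ⬝ᵥ A.mulVec (y' t) + y t ⬝ᵥ B.mulVec (y t) with hE
  have hEderiv : ∀ t, HasDerivAt E 0 t := by
    intro t
    have h := ((hdot A y' y'' y' y'' hy' hy' t).add (hdot B y y' y y' hy hy t))
    have hzero : (y'' t ⬝ᵥ A.mulVec (y' t) + y' t ⬝ᵥ A.mulVec (y'' t))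
        + (y' t ⬝ᵥ B.mulVec (y t) + y t ⬝ᵥ B.mulVec (y' t)) = 0 := by
      rw [hsymm A hA.1 (y'' t) (y' t), hsymm B hB.1 (y t) (y' t)]
      have : y' t ⬝ᵥ A.mulVec (y'' t) + y' t ⬝ᵥ B.mulVec (y t)
          = y' t ⬝ᵥ (A.mulVec (y'' t) + B.mulVec (y t)) := (dotProduct_add _ _ _).symm
      have h0 : y' t ⬝ᵥ A.mulVec (y'' t) + y' t ⬝ᵥ B.mulVec (y t) = 0 := by
        rw [this, hode t, dotProduct_zero]
      linarith
    rw [← hzero]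
    exact h
  have hEconst : ∀ t, E t = E 0 := by
    intro t
    exact is_const_of_deriv_eq_zero (fun s => (hEderiv s).differentiableAt)
      (fun s => (hEderiv s).deriv) t 0
  -- bound
  have hApos : ∀ t, 0 ≤ y' t ⬝ᵥ A.mulVec (y' t) := by
    intro t
    have := hA.posSemidef.dotProduct_mulVec_nonneg (y' t)
    simpa using this
  refine ⟨Real.sqrt (E 0 / c), fun t => ?_⟩
  have h1 : c * ‖y t‖ ^ 2 ≤ y t ⬝ᵥ B.mulVec (y t) := hcB (y t)
  have h2 : y t ⬝ᵥ B.mulVec (y t) ≤ E 0 := by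
    have := hEconst t
    have := hApos t
    simp only [hE] at *
    linarith
  have h3 : ‖y t‖ ^ 2 ≤ E 0 / c := by
    rw [le_div_iff₀ hc]
    linarith [mul_comm c (‖y t‖ ^ 2)]
  calc ‖y t‖ = Real.sqrt (‖y t‖ ^ 2) := by rw [Real.sqrt_sq (norm_nonneg _)]
    _ ≤ Real.sqrt (E 0 / c) := Real.sqrt_le_sqrt h3
end

section
/- Let A be an n×n complex matrix with eigenvalue λ of algebraic multiplicity 1. Then any nonzero column of the adjugate matrix adj(A − λI) is an eigenvector of A for λ. -/
open Polynomial

/-- Lagrange: if `λ` is a simple root of the characteristic polynomial of `A`,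
then any nonzero column of `adj (A − λI)` is an eigenvector of `A` for `λ`. -/
theorem adjugate_column_eigenvector {n : ℕ} (A : Matrix (Fin n) (Fin n) ℂ) (lam : ℂ)
    (h : (A.charpoly).rootMultiplicity lam = 1) (j : Fin n)
    (v : Fin n → ℂ) (hv : v = fun i => (A - lam • 1).adjugate i j) (hv0 : v ≠ 0) :
    A.mulVec v = lam • v := by
  have hroot : A.charpoly.IsRoot lam := by
    rw [← Polynomial.rootMultiplicity_pos A.charpoly_monic.ne_zero, h]
    norm_num
  have heval : ((A.charmatrix).map (Polynomial.evalRingHom lam)) = lam • 1 - A := by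
    ext i k
    by_cases hik : i = k
    · subst hik; simp [Matrix.charmatrix_apply_eq, Matrix.one_apply]
    · simp [Matrix.charmatrix_apply_ne _ _ _ hik, Matrix.one_apply, hik]
  have hdet1 : (lam • (1 : Matrix (Fin n) (Fin n) ℂ) - A).det = 0 := by
    rw [← heval, ← RingHom.mapMatrix_apply, ← RingHom.map_det]
    simpa [Matrix.charpoly] using hroot
  have hdet : (A - lam • (1 : Matrix (Fin n) (Fin n) ℂ)).det = 0 := by
    have : A - lam • 1 = -(lam • 1 - A) := by abel
    rw [this, Matrix.det_neg, hdet1, mul_zero]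
  have key : (A - lam • 1) * (A - lam • 1).adjugate = 0 := by
    rw [Matrix.mul_adjugate, hdet, zero_smul]
  have hmv : (A - lam • 1).mulVec v = 0 := by
    funext i
    have : ((A - lam • 1) * (A - lam • 1).adjugate) i j = 0 := by rw [key]; rfl
    simpa [Matrix.mulVec, Matrix.mul_apply, hv, dotProduct] using this
  have := sub_eq_zero.mp (by simpa [Matrix.sub_mulVec, Matrix.smul_mulVec,
    Matrix.one_mulVec] using hmv)
  simpa using this
end
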